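/- arXiv:2605.16560 — 2 statements merged into one kernel-verified Lean document; each statement's English description precedes it below -/
import Mathlib

section
/- For all λ > 0, μ > 0, σ ≥ 0, τ ≥ 0 and α > 2, setting G(h) := exp(−μτσ²h^α − λπ κ(τ,α) h²) with κ(τ,α) := τ^{2/α}∫_{τ^{−2/α}}^∞ (1+z^{α/2})^{−1}dz for τ > 0 and κ(0,α) := 0, one has (1+τ)^{−1} ∫₀^∞ G(h) · 4πλ^{3/2}h²e^{−λπh²} dh ≤ ∫₀^∞ G(h) · 2λπh e^{−λπh²} dh ≤ ∫₀^∞ G(h) · 2λ^{1/2} e^{−λπh²} dh. That is, the SINR coverage probabilities satisfy p_V^c ≤ p_t^c ≤ p_S^c: coverage at a typical handover is at most coverage at a typical time, which is at most coverage at a typical max-signal epoch. -/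
open MeasureTheory Set
lemma cheb_aux (w f : ℝ → ℝ)
    (hw : ∀ x ∈ Ioi (0:ℝ), 0 ≤ w x)
    (hf : AntitoneOn f (Ioi 0))
    (h1 : IntegrableOn w (Ioi 0))
    (h2 : IntegrableOn (fun x => x * w x) (Ioi 0))
    (h3 : IntegrableOn (fun x => f x * w x) (Ioi 0))
    (h4 : IntegrableOn (fun x => f x * (x * w x)) (Ioi 0)) :
    (∫ x in Ioi (0:ℝ), f x * (x * w x)) * (∫ x in Ioi (0:ℝ), w x) ≤
      (∫ x in Ioi (0:ℝ), f x * w x) * (∫ x in Ioi (0:ℝ), x * w x) := by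
  set μ := (volume : Measure ℝ).restrict (Ioi 0) with hμ
  have e1 : Integrable (fun p : ℝ × ℝ => (f p.1 * w p.1) * (p.2 * w p.2)) (μ.prod μ) :=
    Integrable.mul_prod h3 h2
  have e2 : Integrable (fun p : ℝ × ℝ => (f p.1 * (p.1 * w p.1)) * (w p.2)) (μ.prod μ) :=
    Integrable.mul_prod h4 h1
  have e3 : Integrable (fun p : ℝ × ℝ => (w p.1) * (f p.2 * (p.2 * w p.2))) (μ.prod μ) :=
    Integrable.mul_prod h1 h4
  have e4 : Integrable (fun p : ℝ × ℝ => (p.1 * w p.1) * (f p.2 * w p.2)) (μ.prod μ) :=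
    Integrable.mul_prod h2 h3
  have hae : ∀ᵐ p ∂(μ.prod μ), p ∈ (Ioi (0:ℝ)) ×ˢ (Ioi (0:ℝ)) := by
    rw [hμ, Measure.prod_restrict]
    exact ae_restrict_mem (measurableSet_Ioi.prod measurableSet_Ioi)
  have key : 0 ≤ ∫ p : ℝ × ℝ, (f p.1 - f p.2) * (p.2 - p.1) * (w p.1 * w p.2) ∂(μ.prod μ) := by
    refine integral_nonneg_of_ae (hae.mono fun p hp => ?_)
    have hw1 := hw _ hp.1
    have hw2 := hw _ hp.2
    have h9 : 0 ≤ (f p.1 - f p.2) * (p.2 - p.1) := by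
      rcases le_total p.1 p.2 with h | h
      · exact mul_nonneg (sub_nonneg.2 (hf hp.1 hp.2 h)) (sub_nonneg.2 h)
      · have := hf hp.2 hp.1 h
        nlinarith
    exact mul_nonneg h9 (mul_nonneg hw1 hw2)
  have expand : (fun p : ℝ × ℝ => (f p.1 - f p.2) * (p.2 - p.1) * (w p.1 * w p.2)) =
      fun p : ℝ × ℝ =>
        ((f p.1 * w p.1) * (p.2 * w p.2) - (f p.1 * (p.1 * w p.1)) * (w p.2)) -
        ((w p.1) * (f p.2 * (p.2 * w p.2)) - (p.1 * w p.1) * (f p.2 * w p.2)) := by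
    funext p; ring
  have e12 : Integrable (fun p : ℝ × ℝ =>
      (f p.1 * w p.1) * (p.2 * w p.2) - (f p.1 * (p.1 * w p.1)) * (w p.2)) (μ.prod μ) := e1.sub e2
  have e34 : Integrable (fun p : ℝ × ℝ =>
      (w p.1) * (f p.2 * (p.2 * w p.2)) - (p.1 * w p.1) * (f p.2 * w p.2)) (μ.prod μ) := e3.sub e4
  rw [expand, integral_sub e12 e34, integral_sub e1 e2, integral_sub e3 e4] at key
  have p1 : ∫ p : ℝ × ℝ, (f p.1 * w p.1) * (p.2 * w p.2) ∂(μ.prod μ)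
      = (∫ x, f x * w x ∂μ) * (∫ x, x * w x ∂μ) :=
    integral_prod_mul (fun x => f x * w x) (fun x => x * w x)
  have p2 : ∫ p : ℝ × ℝ, (f p.1 * (p.1 * w p.1)) * (w p.2) ∂(μ.prod μ)
      = (∫ x, f x * (x * w x) ∂μ) * (∫ x, w x ∂μ) :=
    integral_prod_mul (fun x => f x * (x * w x)) w
  have p3 : ∫ p : ℝ × ℝ, (w p.1) * (f p.2 * (p.2 * w p.2)) ∂(μ.prod μ)
      = (∫ x, w x ∂μ) * (∫ x, f x * (x * w x) ∂μ) :=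
    integral_prod_mul w (fun x => f x * (x * w x))
  have p4 : ∫ p : ℝ × ℝ, (p.1 * w p.1) * (f p.2 * w p.2) ∂(μ.prod μ)
      = (∫ x, x * w x ∂μ) * (∫ x, f x * w x ∂μ) :=
    integral_prod_mul (fun x => x * w x) (fun x => f x * w x)
  rw [p1, p2, p3, p4] at key
  linarith

/-- Comparison of SINR coverage probabilities `p_V^c ≤ p_t^c ≤ p_S^c` in the system with
fading: for all `λ > 0`, `μ > 0`, `σ ≥ 0`, `τ ≥ 0` and `α > 2`, with
`κ(τ,α) = τ^{2/α}∫_{τ^{−2/α}}^∞ (1+z^{α/2})^{−1}dz` for `τ > 0`, `κ(0,α) = 0`, and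
`G(h) = exp(−μτσ²h^α − λπκ(τ,α)h²)`,
`(1+τ)⁻¹ ∫₀^∞ G(h) 4πλ^{3/2}h²e^{−λπh²} dh ≤ ∫₀^∞ G(h) 2λπh e^{−λπh²} dh
  ≤ ∫₀^∞ G(h) 2λ^{1/2} e^{−λπh²} dh`. -/
theorem stmt_17 (lam μ σ τ α : ℝ) (hlam : 0 < lam) (hμ : 0 < μ) (hσ : 0 ≤ σ)
    (hτ : 0 ≤ τ) (hα : 2 < α) (κ : ℝ)
    (hκ : κ = if τ = 0 then 0
      else τ ^ (2/α) * ∫ z in Ioi (τ ^ (-2/α)), (1 + z ^ (α/2))⁻¹)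
    (G : ℝ → ℝ)
    (hG : ∀ h : ℝ, G h = Real.exp (-(μ * τ * σ ^ 2 * h ^ α) - lam * Real.pi * κ * h ^ 2)) :
    (1 + τ)⁻¹ *
        (∫ h in Ioi (0:ℝ), G h *
          (4 * Real.pi * lam ^ ((3:ℝ)/2) * h ^ 2 * Real.exp (-(lam * Real.pi * h ^ 2)))) ≤
      (∫ h in Ioi (0:ℝ), G h *
        (2 * lam * Real.pi * h * Real.exp (-(lam * Real.pi * h ^ 2)))) ∧
    (∫ h in Ioi (0:ℝ), G h *
        (2 * lam * Real.pi * h * Real.exp (-(lam * Real.pi * h ^ 2)))) ≤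
      ∫ h in Ioi (0:ℝ), G h *
        (2 * lam ^ ((1:ℝ)/2) * Real.exp (-(lam * Real.pi * h ^ 2))) := by
  have hπ := Real.pi_pos
  set b := lam * Real.pi with hbdef
  have hb : 0 < b := mul_pos hlam hπ
  have hbne : b ≠ 0 := ne_of_gt hb
  -- κ is nonnegative
  have hκ0 : 0 ≤ κ := by
    rw [hκ]
    split_ifs with h
    · exact le_rfl
    · have hτ' : 0 < τ := lt_of_le_of_ne hτ (Ne.symm h)
      refine mul_nonneg (Real.rpow_nonneg hτ _) ?_
      refine setIntegral_nonneg measurableSet_Ioi (fun z hz => ?_)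
      have hz0 : 0 < z := lt_trans (Real.rpow_pos_of_pos hτ' _) hz
      have : 0 ≤ z ^ (α/2) := Real.rpow_nonneg hz0.le _
      positivity
  -- facts about G
  have hG0 : ∀ x : ℝ, 0 ≤ G x := fun x => by rw [hG]; exact (Real.exp_pos _).le
  have hG1 : ∀ x ∈ Ioi (0:ℝ), G x ≤ 1 := by
    intro x hx
    have hx0 : 0 < x := hx
    rw [hG, Real.exp_le_one_iff]
    have h1 : 0 ≤ μ * τ * σ ^ 2 * x ^ α :=
      mul_nonneg (mul_nonneg (mul_nonneg hμ.le hτ) (sq_nonneg σ)) (Real.rpow_nonneg hx0.le _)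
    have h2 : 0 ≤ b * κ * x ^ 2 := by positivity
    linarith
  have hmono : AntitoneOn G (Ioi 0) := by
    intro x hx y hy hxy
    have hx0 : (0:ℝ) < x := hx
    rw [hG, hG]
    apply Real.exp_le_exp.2
    have h1 : x ^ α ≤ y ^ α := Real.rpow_le_rpow hx0.le hxy (by linarith)
    have h2 : x ^ 2 ≤ y ^ 2 := by nlinarith
    have c1 : 0 ≤ μ * τ * σ ^ 2 := mul_nonneg (mul_nonneg hμ.le hτ) (sq_nonneg σ)
    have c2 : 0 ≤ b * κ := mul_nonneg hb.le hκ0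
    nlinarith
  have hGm : Measurable G := by
    have : G = fun h : ℝ =>
        Real.exp (-(μ * τ * σ ^ 2 * h ^ α) - b * κ * h ^ 2) := funext hG
    rw [this]
    fun_prop
  -- integrability facts
  have hEm : Measurable (fun x : ℝ => Real.exp (-(b * x ^ 2))) := by fun_prop
  have hEi : IntegrableOn (fun x : ℝ => Real.exp (-(b * x ^ 2))) (Ioi 0) := by
    simpa [neg_mul] using (integrable_exp_neg_mul_sq hb).integrableOn
  have hxEi : IntegrableOn (fun x : ℝ => x * Real.exp (-(b * x ^ 2))) (Ioi 0) := by
    simpa [neg_mul] using (integrable_mul_exp_neg_mul_sq hb).integrableOn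
  have hx2Ei : IntegrableOn (fun x : ℝ => x * (x * Real.exp (-(b * x ^ 2)))) (Ioi 0) := by
    have h := integrableOn_rpow_mul_exp_neg_mul_sq hb (s := 2) (by norm_num)
    refine h.congr_fun (fun x hx => ?_) measurableSet_Ioi
    simp only [Real.rpow_two]
    ring
  have hbound : ∀ v : ℝ → ℝ, Measurable v → IntegrableOn v (Ioi 0) →
      (∀ x ∈ Ioi (0:ℝ), 0 ≤ v x) → IntegrableOn (fun x => G x * v x) (Ioi 0) := by
    intro v hvm hvi hvnn
    refine Integrable.mono' hvi ((hGm.mul hvm).aestronglyMeasurable) ?_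
    filter_upwards [ae_restrict_mem measurableSet_Ioi] with x hx
    rw [Real.norm_eq_abs, abs_of_nonneg (mul_nonneg (hG0 x) (hvnn x hx))]
    calc G x * v x ≤ 1 * v x := mul_le_mul_of_nonneg_right (hG1 x hx) (hvnn x hx)
      _ = v x := one_mul _
  have hGE : IntegrableOn (fun x => G x * Real.exp (-(b * x ^ 2))) (Ioi 0) :=
    hbound _ hEm hEi (fun x _ => (Real.exp_pos _).le)
  have hGxE : IntegrableOn (fun x => G x * (x * Real.exp (-(b * x ^ 2)))) (Ioi 0) :=
    hbound _ (measurable_id.mul hEm) hxEi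
      (fun x hx => mul_nonneg (le_of_lt hx) (Real.exp_pos _).le)
  have hGx2E : IntegrableOn (fun x => G x * (x * (x * Real.exp (-(b * x ^ 2))))) (Ioi 0) :=
    hbound _ (measurable_id.mul (measurable_id.mul hEm)) hx2Ei
      (fun x hx => mul_nonneg (le_of_lt hx)
        (mul_nonneg (le_of_lt hx) (Real.exp_pos _).le))
  -- values of the Gaussian moments
  have valD : ∫ x in Ioi (0:ℝ), Real.exp (-(b * x ^ 2)) = Real.sqrt (Real.pi / b) / 2 := by
    simpa [neg_mul] using integral_gaussian_Ioi b
  have valB : ∫ x in Ioi (0:ℝ), x * Real.exp (-(b * x ^ 2)) = b⁻¹ * (1/2) := by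
    have hval := integral_rpow_mul_exp_neg_mul_rpow (p := 2) (q := 1) (b := b)
      two_pos (by norm_num) hb
    have e : ∀ x ∈ Ioi (0:ℝ),
        x * Real.exp (-(b * x ^ 2)) = x ^ (1:ℝ) * Real.exp (-b * x ^ (2:ℝ)) := by
      intro x hx
      rw [Real.rpow_one, show (2:ℝ) = ((2:ℕ):ℝ) by norm_num, Real.rpow_natCast, neg_mul]
    calc ∫ x in Ioi (0:ℝ), x * Real.exp (-(b * x ^ 2))
        = ∫ x in Ioi (0:ℝ), x ^ (1:ℝ) * Real.exp (-b * x ^ (2:ℝ)) :=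
          setIntegral_congr_fun measurableSet_Ioi e
      _ = b ^ (-((1:ℝ) + 1) / 2) * (1 / 2) * Real.Gamma (((1:ℝ) + 1) / 2) := hval
      _ = b⁻¹ * (1/2) := by
          rw [show (-((1:ℝ) + 1) / 2) = -1 by norm_num, show (((1:ℝ) + 1) / 2) = 1 by norm_num,
            Real.rpow_neg_one, Real.Gamma_one, mul_one]
  have valQ : ∫ x in Ioi (0:ℝ), x * (x * Real.exp (-(b * x ^ 2)))
      = b ^ (-(3:ℝ)/2) * (1/2) * (Real.sqrt Real.pi / 2) := by
    have hval := integral_rpow_mul_exp_neg_mul_rpow (p := 2) (q := 2) (b := b)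
      two_pos (by norm_num) hb
    have e : ∀ x ∈ Ioi (0:ℝ),
        x * (x * Real.exp (-(b * x ^ 2))) = x ^ (2:ℝ) * Real.exp (-b * x ^ (2:ℝ)) := by
      intro x hx
      rw [show (2:ℝ) = ((2:ℕ):ℝ) by norm_num, Real.rpow_natCast, neg_mul]
      ring
    calc ∫ x in Ioi (0:ℝ), x * (x * Real.exp (-(b * x ^ 2)))
        = ∫ x in Ioi (0:ℝ), x ^ (2:ℝ) * Real.exp (-b * x ^ (2:ℝ)) :=
          setIntegral_congr_fun measurableSet_Ioi e
      _ = b ^ (-((2:ℝ) + 1) / 2) * (1 / 2) * Real.Gamma (((2:ℝ) + 1) / 2) := hval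
      _ = b ^ (-(3:ℝ)/2) * (1/2) * (Real.sqrt Real.pi / 2) := by
          rw [show (-((2:ℝ) + 1) / 2) = -(3:ℝ)/2 by norm_num,
            show (((2:ℝ) + 1) / 2) = 1/2 + 1 by norm_num,
            Real.Gamma_add_one (by norm_num), Real.Gamma_one_half_eq]
          ring
  -- Chebyshev inequalities
  have cheb2 : (∫ x in Ioi (0:ℝ), G x * (x * Real.exp (-(b * x ^ 2)))) *
      (Real.sqrt (Real.pi / b) / 2) ≤
      (∫ x in Ioi (0:ℝ), G x * Real.exp (-(b * x ^ 2))) * (b⁻¹ * (1/2)) := by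
    have h := cheb_aux (fun x => Real.exp (-(b * x ^ 2))) G
      (fun x _ => (Real.exp_pos _).le) hmono hEi hxEi hGE hGxE
    simpa only [valD, valB] using h
  have cheb1 : (∫ x in Ioi (0:ℝ), G x * (x * (x * Real.exp (-(b * x ^ 2))))) *
      (b⁻¹ * (1/2)) ≤
      (∫ x in Ioi (0:ℝ), G x * (x * Real.exp (-(b * x ^ 2)))) *
      (b ^ (-(3:ℝ)/2) * (1/2) * (Real.sqrt Real.pi / 2)) := by
    have h := cheb_aux (fun x => x * Real.exp (-(b * x ^ 2))) G
      (fun x hx => mul_nonneg (le_of_lt hx) (Real.exp_pos _).le)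
      hmono hxEi hx2Ei hGxE hGx2E
    simpa only [valB, valQ] using h
  -- square-root bookkeeping
  set s := lam ^ ((1:ℝ)/2) with hsdef
  have hs : s = Real.sqrt lam := (Real.sqrt_eq_rpow lam).symm
  have hspos : 0 < s := Real.rpow_pos_of_pos hlam _
  have hsne : s ≠ 0 := ne_of_gt hspos
  have hu : Real.sqrt (Real.pi / b) = s⁻¹ := by
    rw [hbdef, show Real.pi / (lam * Real.pi) = lam⁻¹ by field_simp,
      Real.sqrt_inv, hs]
  have hlam32 : lam ^ ((3:ℝ)/2) = lam * s := by
    rw [hsdef, show (3:ℝ)/2 = 1 + 1/2 by norm_num, Real.rpow_add hlam, Real.rpow_one]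
  have hsπpos : 0 < s * Real.sqrt Real.pi := mul_pos hspos (Real.sqrt_pos.2 hπ)
  have hb32 : b ^ (-(3:ℝ)/2) * b = (s * Real.sqrt Real.pi)⁻¹ := by
    have h1 : b ^ (-(3:ℝ)/2) * b = b ^ (-(3:ℝ)/2 + 1) := by
      rw [Real.rpow_add hb, Real.rpow_one]
    rw [h1, show (-(3:ℝ)/2 + 1) = -(1/2) by norm_num, Real.rpow_neg hb.le,
      ← Real.sqrt_eq_rpow, hbdef, Real.sqrt_mul hlam.le, hs]
  -- abbreviations
  set T := ∫ x in Ioi (0:ℝ), G x * (x * Real.exp (-(b * x ^ 2))) with hT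
  set S := ∫ x in Ioi (0:ℝ), G x * Real.exp (-(b * x ^ 2)) with hS
  set U := ∫ x in Ioi (0:ℝ), G x * (x * (x * Real.exp (-(b * x ^ 2)))) with hU
  have hUnn : 0 ≤ U := by
    rw [hU]
    refine setIntegral_nonneg measurableSet_Ioi (fun x hx => ?_)
    exact mul_nonneg (hG0 x) (mul_nonneg (le_of_lt hx)
      (mul_nonneg (le_of_lt hx) (Real.exp_pos _).le))
  -- rewriting the three integrals in the goal
  have eq1L : (∫ h in Ioi (0:ℝ), G h *
      (4 * Real.pi * lam ^ ((3:ℝ)/2) * h ^ 2 * Real.exp (-(b * h ^ 2))))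
      = (4 * Real.pi * lam ^ ((3:ℝ)/2)) * U := by
    rw [hU, ← integral_const_mul]
    refine setIntegral_congr_fun measurableSet_Ioi (fun x hx => ?_)
    ring
  have eq2L : (∫ h in Ioi (0:ℝ), G h *
      (2 * lam * Real.pi * h * Real.exp (-(b * h ^ 2)))) = (2 * b) * T := by
    rw [hT, ← integral_const_mul]
    refine setIntegral_congr_fun measurableSet_Ioi (fun x hx => ?_)
    rw [hbdef]; ring
  have eq2R : (∫ h in Ioi (0:ℝ), G h *
      (2 * lam ^ ((1:ℝ)/2) * Real.exp (-(b * h ^ 2)))) = (2 * s) * S := by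
    rw [hS, hsdef, ← integral_const_mul]
    refine setIntegral_congr_fun measurableSet_Ioi (fun x hx => ?_)
    ring
  -- the two key inequalities
  have key1 : 2 * s * U ≤ T := by
    calc 2 * s * U = (U * (b⁻¹ * (1/2))) * (4 * s * b) := by field_simp; ring
      _ ≤ (T * (b ^ (-(3:ℝ)/2) * (1/2) * (Real.sqrt Real.pi / 2))) * (4 * s * b) :=
          mul_le_mul_of_nonneg_right cheb1 (by positivity)
      _ = T * ((s * Real.sqrt Real.pi) * (b ^ (-(3:ℝ)/2) * b)) := by ring
      _ = T := by rw [hb32, mul_inv_cancel₀ (ne_of_gt hsπpos), mul_one]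
  have key2 : (2 * b) * T ≤ (2 * s) * S := by
    calc (2 * b) * T = (T * (Real.sqrt (Real.pi / b) / 2)) * (4 * b * s) := by
          rw [hu]; field_simp; ring
      _ ≤ (S * (b⁻¹ * (1/2))) * (4 * b * s) :=
          mul_le_mul_of_nonneg_right cheb2 (by positivity)
      _ = (2 * s) * S := by field_simp; ring
  constructor
  · rw [eq1L, eq2L]
    have hτinv : (1 + τ)⁻¹ ≤ 1 := by
      rw [← inv_one]
      exact inv_anti₀ one_pos (by linarith)
    calc (1 + τ)⁻¹ * ((4 * Real.pi * lam ^ ((3:ℝ)/2)) * U)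
        ≤ 1 * ((4 * Real.pi * lam ^ ((3:ℝ)/2)) * U) :=
          mul_le_mul_of_nonneg_right hτinv (by positivity)
      _ = (2 * s * U) * (2 * Real.pi * lam) := by rw [hlam32]; ring
      _ ≤ T * (2 * Real.pi * lam) := mul_le_mul_of_nonneg_right key1 (by positivity)
      _ = (2 * b) * T := by rw [hbdef]; ring
  · rw [eq2L, eq2R]
    exact key2
end

section
/- For all λ > 0, α > 0 and τ ≥ 1, ∫₀^∞ 2λπ r e^{−λπr²} ( ∫_{τ^{1/α} r}^∞ 2λπ h e^{−λπ(h²−r²)} dh ) dr = τ^{−2/α}. That is, in the interference-limited regime without fading, the probability that the signal-to-tropical-interference ratio at a typical time exceeds τ, i.e. P(R₁ > τ^{1/α} R), equals τ^{−2/α}; in particular it does not depend on λ. -/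
open MeasureTheory Set

lemma aux_int (b a : ℝ) (hb : 0 < b) :
    ∫ x in Ioi a, x * Real.exp (-(b * x ^ 2)) = Real.exp (-(b * a ^ 2)) / (2 * b) := by
  have hderiv : ∀ x ∈ Ici a,
      HasDerivAt (fun x : ℝ => -Real.exp (-(b * x ^ 2)) / (2 * b))
        (x * Real.exp (-(b * x ^ 2))) x := by
    intro x _
    have h1 : HasDerivAt (fun x : ℝ => -(b * x ^ 2)) (-(b * (2 * x))) x := by
      simpa [Pi.neg_def] using ((hasDerivAt_pow 2 x).const_mul b).neg
    have h2 := (h1.exp.neg.div_const (2 * b))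
    refine h2.congr_deriv ?_
    rw [div_eq_iff (by positivity)]
    ring
  have hint : IntegrableOn (fun x : ℝ => x * Real.exp (-(b * x ^ 2))) (Ioi a) := by
    have := integrable_mul_exp_neg_mul_sq hb
    simpa [neg_mul] using this.integrableOn (s := Ioi a)
  have htend : Filter.Tendsto (fun x : ℝ => -Real.exp (-(b * x ^ 2)) / (2 * b))
      Filter.atTop (nhds 0) := by
    have : Filter.Tendsto (fun x : ℝ => -(b * x ^ 2)) Filter.atTop Filter.atBot := by
      apply Filter.tendsto_neg_atBot_iff.mpr
      exact Filter.Tendsto.const_mul_atTop hb (Filter.tendsto_pow_atTop (by norm_num))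
    have h := (Real.tendsto_exp_atBot.comp this).neg.div_const (2 * b)
    simpa using h
  have := integral_Ioi_of_hasDerivAt_of_tendsto' hderiv hint htend
  rw [this]
  ring

/-- STIR coverage at a typical time in the interference-limited no-fading regime:
for all `λ > 0`, `α > 0` and `τ ≥ 1`,
`∫₀^∞ 2λπ r e^{−λπr²} ∫_{τ^{1/α} r}^∞ 2λπ h e^{−λπ(h²−r²)} dh dr = τ^{−2/α}`,
i.e. `P(R₁ > τ^{1/α} R) = τ^{−2/α}`, independently of `λ`. -/
theorem stmt_19 (lam α τ : ℝ) (hlam : 0 < lam) (hα : 0 < α) (hτ : 1 ≤ τ) :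
    (∫ r in Ioi (0:ℝ), 2 * lam * Real.pi * r * Real.exp (-(lam * Real.pi * r ^ 2)) *
        ∫ h in Ioi (τ ^ (1/α) * r),
          2 * lam * Real.pi * h * Real.exp (-(lam * Real.pi * (h ^ 2 - r ^ 2)))) =
      τ ^ (-2 / α) := by
  set c : ℝ := τ ^ (1/α) with hc
  have hτ0 : (0:ℝ) < τ := lt_of_lt_of_le one_pos hτ
  have hc0 : 0 < c := Real.rpow_pos_of_pos hτ0 _
  have hbpos : 0 < lam * Real.pi := mul_pos hlam Real.pi_pos
  have hbc : 0 < lam * Real.pi * c ^ 2 := mul_pos hbpos (by positivity)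
  -- Evaluate the inner integral and simplify the integrand
  have hcongr : ∀ r ∈ Ioi (0:ℝ),
      2 * lam * Real.pi * r * Real.exp (-(lam * Real.pi * r ^ 2)) *
        ∫ h in Ioi (c * r),
          2 * lam * Real.pi * h * Real.exp (-(lam * Real.pi * (h ^ 2 - r ^ 2)))
      = (2 * lam * Real.pi) * (r * Real.exp (-(lam * Real.pi * c ^ 2 * r ^ 2))) := by
    intro r _
    have hinner : (∫ h in Ioi (c * r),
        2 * lam * Real.pi * h * Real.exp (-(lam * Real.pi * (h ^ 2 - r ^ 2))))
        = (2 * lam * Real.pi * Real.exp (lam * Real.pi * r ^ 2)) *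
          ∫ h in Ioi (c * r), h * Real.exp (-(lam * Real.pi * h ^ 2)) := by
      rw [← integral_const_mul]
      refine setIntegral_congr_fun measurableSet_Ioi fun h _ => ?_
      rw [show -(lam * Real.pi * (h ^ 2 - r ^ 2))
        = lam * Real.pi * r ^ 2 + -(lam * Real.pi * h ^ 2) by ring, Real.exp_add]
      ring
    rw [hinner, aux_int _ _ hbpos]
    have e1 : Real.exp (-(lam * Real.pi * r ^ 2)) * Real.exp (lam * Real.pi * r ^ 2) *
        Real.exp (-(lam * Real.pi * (c * r) ^ 2)) = Real.exp (-(lam * Real.pi * c ^ 2 * r ^ 2)) := by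
      rw [← Real.exp_add, ← Real.exp_add]; congr 1; ring
    calc 2 * lam * Real.pi * r * Real.exp (-(lam * Real.pi * r ^ 2)) *
          (2 * lam * Real.pi * Real.exp (lam * Real.pi * r ^ 2) *
            (Real.exp (-(lam * Real.pi * (c * r) ^ 2)) / (2 * (lam * Real.pi))))
        = (2 * lam * Real.pi) * r * (Real.exp (-(lam * Real.pi * r ^ 2)) *
            Real.exp (lam * Real.pi * r ^ 2) * Real.exp (-(lam * Real.pi * (c * r) ^ 2))) := by
          field_simp
      _ = 2 * lam * Real.pi * (r * Real.exp (-(lam * Real.pi * c ^ 2 * r ^ 2))) := by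
          rw [e1]; ring
  rw [setIntegral_congr_fun measurableSet_Ioi hcongr, integral_const_mul,
    aux_int _ _ hbc]
  have h1 : (0:ℝ) ^ 2 = 0 := by norm_num
  rw [h1, mul_zero, neg_zero, Real.exp_zero]
  have hceq : c ^ 2 = τ ^ (2 / α) := by
    rw [hc, ← Real.rpow_natCast (τ ^ (1/α)) 2, ← Real.rpow_mul hτ0.le]
    congr 1
    push_cast
    field_simp
  have : 2 * lam * Real.pi * (1 / (2 * (lam * Real.pi * c ^ 2))) = (c ^ 2)⁻¹ := by
    field_simp
  rw [this, hceq, ← Real.rpow_neg hτ0.le]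
  congr 1
  ring
end
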